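/- Let $0<p_1\le u_1<\infty$ and $0<u_2<\infty$. Then $m_{u_1,p_1}(\mathbb{Z}^d)\hookrightarrow \ell_{u_2}(\mathbb{Z}^d)$ continuously if, and only if, $u_1\le u_2$ and $p_1=u_1$. In particular, if $p_1<u_1$ then $m_{u_1,p_1}(\mathbb{Z}^d)$ does not embed continuously into any space $\ell_r(\mathbb{Z}^d)$ with $0<r<\infty$. -/

import Mathlib

open scoped ENNReal NNReal BigOperators
open Filter

/-- The unit cube `Q_{0,k}` is contained in the dyadic cube `Q_{-j,m}` of side length `2^j`. -/
def inDyadic (d j : ℕ) (m k : Fin d → ℤ) : Prop :=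
  ∀ i, 2 ^ j * m i ≤ k i ∧ k i < 2 ^ j * (m i + 1)

/-- The Morrey sequence space quasi-norm `‖λ | m_{u,p}(ℤ^d)‖`, with values in `ℝ≥0∞`. -/
noncomputable def morreyNorm (d : ℕ) (u p : ℝ) (lam : (Fin d → ℤ) → ℂ) : ℝ≥0∞ :=
  ⨆ (j : ℕ) (m : Fin d → ℤ),
    ((2 : ℝ≥0∞) ^ (j * d)) ^ (1 / u - 1 / p) *
      (∑' k : {k : Fin d → ℤ // inDyadic d j m k}, (‖lam k.1‖₊ : ℝ≥0∞) ^ p) ^ (1 / p)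

/-- The `ℓ_r(ℤ^d)` norm. -/
noncomputable def lpNorm (d : ℕ) (r : ℝ) (lam : (Fin d → ℤ) → ℂ) : ℝ≥0∞ :=
  (∑' k : Fin d → ℤ, (‖lam k‖₊ : ℝ≥0∞) ^ r) ^ (1 / r)

/-- The `ℓ_∞(ℤ^d)` norm. -/
noncomputable def lInftyNorm (d : ℕ) (lam : (Fin d → ℤ) → ℂ) : ℝ≥0∞ :=
  ⨆ k : Fin d → ℤ, (‖lam k‖₊ : ℝ≥0∞)

/-- The weak Lorentz `ℓ_{u,∞}(ℤ^d)` norm, via the distribution function. -/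
noncomputable def weakNorm (d : ℕ) (u : ℝ) (lam : (Fin d → ℤ) → ℂ) : ℝ≥0∞ :=
  ⨆ t : ℝ≥0, (t : ℝ≥0∞) *
    (∑' _ : {k : Fin d → ℤ // (t : ℝ) < ‖lam k‖}, (1 : ℝ≥0∞)) ^ (1 / u)

/-- The norm of the level-`j` space `X^{(j)}_{u,p}(ℤ^d)`. -/
noncomputable def XjNorm (d : ℕ) (u p p' : ℝ) (j : ℕ) (lam : (Fin d → ℤ) → ℂ) : ℝ≥0∞ :=
  ((2 : ℝ≥0∞) ^ (j * d)) ^ (1 / p - 1 / u) *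
    ∑' m : Fin d → ℤ,
      (∑' k : {k : Fin d → ℤ // inDyadic d j m k}, (‖lam k.1‖₊ : ℝ≥0∞) ^ p') ^ (1 / p')

/-- The norm of `X_{u,p}(ℤ^d)`: infimum over decompositions `λ = ∑_j λ^{(j)}`. -/
noncomputable def XupNorm (d : ℕ) (u p p' : ℝ) (lam : (Fin d → ℤ) → ℂ) : ℝ≥0∞ :=
  ⨅ (L : ℕ → (Fin d → ℤ) → ℂ) (_ : ∀ k, HasSum (fun j => L j k) (lam k)),
    ∑' j : ℕ, XjNorm d u p p' j (L j)

/-- Membership in `m_{u,p}(ℤ^d)`. -/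
def MemMorrey (d : ℕ) (u p : ℝ) (lam : (Fin d → ℤ) → ℂ) : Prop :=
  morreyNorm d u p lam ≠ ⊤

/-- Membership in `m^{00}_{u,p}(ℤ^d)`, the closure of the finitely supported sequences. -/
def MemMorrey00 (d : ℕ) (u p : ℝ) (lam : (Fin d → ℤ) → ℂ) : Prop :=
  MemMorrey d u p lam ∧
    ∀ ε : ℝ≥0∞, 0 < ε → ∃ mu : (Fin d → ℤ) → ℂ,
      (Function.support mu).Finite ∧ morreyNorm d u p (lam - mu) < ε

/-- `Q_{-ν,m} ⊆ Q_{-j,0}` for dyadic cubes. -/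
def subCube (d j ν : ℕ) (m : Fin d → ℤ) : Prop :=
  ν ≤ j ∧ ∀ i, 0 ≤ m i ∧ 2 ^ ν * (m i + 1) ≤ 2 ^ j

/-- Norm of the finite-dimensional Morrey space `m^{2^{jd}}_{u,p}` on the cube `Q_{-j,0}`. -/
noncomputable def finMorreyNorm (d : ℕ) (u p : ℝ) (j : ℕ) (lam : (Fin d → ℤ) → ℂ) : ℝ≥0∞ :=
  ⨆ (ν : ℕ) (m : Fin d → ℤ) (_ : subCube d j ν m),
    ((2 : ℝ≥0∞) ^ (ν * d)) ^ (1 / u - 1 / p) *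
      (∑' k : {k : Fin d → ℤ // inDyadic d ν m k}, (‖lam k.1‖₊ : ℝ≥0∞) ^ p) ^ (1 / p)

/-- Operator norm of `id_j : m^{2^{jd}}_{u₁,p₁} → m^{2^{jd}}_{u₂,p₂}`. -/
noncomputable def morreyOpNorm (d : ℕ) (u₁ p₁ u₂ p₂ : ℝ) (j : ℕ) : ℝ≥0∞ :=
  ⨆ (lam : (Fin d → ℤ) → ℂ) (_ : finMorreyNorm d u₁ p₁ j lam ≤ 1),
    finMorreyNorm d u₂ p₂ j lam

set_option maxHeartbeats 1000000

/-- Multiples of `2^s` in the intersection of the dyadic interval `[2^ν a, 2^ν(a+1))`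
with `[0, 2^j)`. -/
noncomputable def coordSet (ν j s : ℕ) (a : ℤ) : Finset ℤ :=
  (Finset.Ico (max ((2:ℤ)^ν * a) 0) (min ((2:ℤ)^ν * (a+1)) ((2:ℤ)^j))).filter
    (fun x => (2^s : ℤ) ∣ x)

lemma coord_card (ν j s : ℕ) (hsj : s ≤ j) (a : ℤ) :
    (coordSet ν j s a).card ≤ 2 ^ (min ν j - min ν s) := by
  set L : ℤ := max ((2:ℤ)^ν * a) 0 with hL
  set U : ℤ := min ((2:ℤ)^ν * (a+1)) ((2:ℤ)^j) with hU
  have hmem : ∀ x ∈ coordSet ν j s a, (L ≤ x ∧ x < U) ∧ (2^s : ℤ) ∣ x := by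
    intro x hx
    simp only [coordSet, Finset.mem_filter, Finset.mem_Ico] at hx
    exact ⟨⟨hx.1.1, hx.1.2⟩, hx.2⟩
  rcases lt_or_ge ν s with hνs | hsν
  · -- small cube: at most one point
    have hmin : min ν j - min ν s = 0 := by omega
    rw [hmin, pow_zero]
    apply Finset.card_le_one.mpr
    intro x hx y hy
    obtain ⟨⟨hxL, hxU⟩, hxd⟩ := hmem x hx
    obtain ⟨⟨hyL, hyU⟩, hyd⟩ := hmem y hy
    by_contra hxy
    have hdvd : (2^s : ℤ) ∣ y - x := dvd_sub hyd hxd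
    have hne : y - x ≠ 0 := sub_ne_zero.mpr (Ne.symm hxy)
    have habs : (2^s : ℤ) ≤ |y - x| := Int.le_of_dvd (abs_pos.mpr hne) ((dvd_abs _ _).mpr hdvd)
    have hLb : (2:ℤ)^ν * a ≤ L := le_max_left _ _
    have hUb : U ≤ (2:ℤ)^ν * (a+1) := min_le_left _ _
    have h1 : |y - x| < (2:ℤ)^ν := by
      rw [abs_sub_lt_iff]
      constructor <;> nlinarith [hxL, hxU, hyL, hyU]
    have h2 : (2:ℤ)^ν < 2^s := by
      exact pow_lt_pow_right₀ (by norm_num) hνs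
    linarith
  · -- aligned case
    have hdL : (2^s : ℤ) ∣ L := by
      rcases max_choice ((2:ℤ)^ν * a) 0 with h | h <;> rw [hL, h]
      · exact dvd_mul_of_dvd_left (pow_dvd_pow 2 hsν) a
      · exact dvd_zero _
    obtain ⟨t, ht⟩ := hdL
    set K : ℤ := 2 ^ (min ν j - s) with hK
    have hUL : U ≤ L + 2^s * K := by
      have h2K : (2:ℤ)^s * K = 2 ^ (min ν j) := by
        rw [hK, ← pow_add]
        congr 1
        omega
      rw [h2K]
      rcases le_total ν j with h | h
      · have : min ν j = ν := min_eq_left h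
        rw [this]
        have : U ≤ (2:ℤ)^ν * (a+1) := min_le_left _ _
        have hLb : (2:ℤ)^ν * a ≤ L := le_max_left _ _
        nlinarith
      · have : min ν j = j := min_eq_right h
        rw [this]
        have : U ≤ (2:ℤ)^j := min_le_right _ _
        have hLb : (0:ℤ) ≤ L := le_max_right _ _
        linarith
    have hcard : (coordSet ν j s a).card ≤ (Finset.Ico t (t + K)).card := by
      apply Finset.card_le_card_of_injOn (fun x => x / 2^s)
      · intro x hx
        obtain ⟨⟨hxL, hxU⟩, hxd⟩ := hmem x hx
        obtain ⟨y, rfl⟩ := hxd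
        have h2s : (0:ℤ) < 2^s := by positivity
        simp only [Finset.mem_coe]
        rw [Finset.mem_Ico, Int.mul_ediv_cancel_left _ (ne_of_gt h2s)]
        constructor
        · have : (2:ℤ)^s * t ≤ 2^s * y := by rw [← ht]; exact hxL
          exact le_of_mul_le_mul_left this h2s
        · have : (2:ℤ)^s * y < 2^s * (t + K) := by
            rw [mul_add, ← ht]; linarith
          linarith [lt_of_mul_lt_mul_left this (le_of_lt h2s)]
      · intro x hx y hy hxy
        obtain ⟨_, hxd⟩ := hmem x (Finset.mem_coe.mp hx)
        obtain ⟨_, hyd⟩ := hmem y (Finset.mem_coe.mp hy)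
        simp only at hxy
        rw [← Int.ediv_mul_cancel hxd, ← Int.ediv_mul_cancel hyd, hxy]
    have hIco : (Finset.Ico t (t + K)).card = 2 ^ (min ν j - s) := by
      rw [Int.card_Ico]
      have : t + K - t = K := by ring
      rw [this, hK]
      have : ((2:ℤ)^(min ν j - s)) = ((2^(min ν j - s) : ℕ) : ℤ) := by push_cast; ring
      rw [this, Int.toNat_natCast]
    have hms : min ν s = s := min_eq_right hsν
    rw [hms] at *
    omega

open Classical in
noncomputable def lamJS (d j s : ℕ) : (Fin d → ℤ) → ℂ := fun k =>
  if ∀ i, 0 ≤ k i ∧ k i < 2^j ∧ (2^s : ℤ) ∣ k i then 1 else 0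

lemma lamJS_nnnorm_rpow (d j s : ℕ) (p : ℝ) (hp : 0 < p) (k : Fin d → ℤ) :
    (‖lamJS d j s k‖₊ : ℝ≥0∞) ^ p
      = if ∀ i, 0 ≤ k i ∧ k i < 2^j ∧ (2^s : ℤ) ∣ k i then 1 else 0 := by
  unfold lamJS
  split_ifs with h <;> simp [ENNReal.zero_rpow_of_pos hp]

lemma N_le (d ν j s : ℕ) (hsj : s ≤ j) (p : ℝ) (hp : 0 < p) (m : Fin d → ℤ) :
    ∑' k : {k : Fin d → ℤ // inDyadic d ν m k}, (‖lamJS d j s k.1‖₊ : ℝ≥0∞) ^ p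
      ≤ 2 ^ ((min ν j - min ν s) * d) := by
  classical
  set F : Finset (Fin d → ℤ) := Fintype.piFinset (fun i => coordSet ν j s (m i)) with hF
  have step1 : ∑' k : {k : Fin d → ℤ // inDyadic d ν m k}, (‖lamJS d j s k.1‖₊ : ℝ≥0∞) ^ p
      ≤ ∑' k : {k : Fin d → ℤ // inDyadic d ν m k},
          Set.indicator (↑F) (fun _ => (1:ℝ≥0∞)) k.1 := by
    apply ENNReal.tsum_le_tsum
    intro k
    rw [lamJS_nnnorm_rpow d j s p hp]
    split_ifs with h
    · have hkF : k.1 ∈ F := by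
        rw [hF, Fintype.mem_piFinset]
        intro i
        obtain ⟨h1, h2⟩ := k.2 i
        obtain ⟨h3, h4, h5⟩ := h i
        simp only [coordSet, Finset.mem_filter, Finset.mem_Ico]
        exact ⟨⟨max_le h1 h3, lt_min h2 h4⟩, h5⟩
      rw [Set.indicator_of_mem (Finset.mem_coe.mpr hkF)]
    · exact zero_le
  have step2 : ∑' k : {k : Fin d → ℤ // inDyadic d ν m k},
        Set.indicator (↑F) (fun _ => (1:ℝ≥0∞)) k.1
      ≤ ∑' k : Fin d → ℤ, Set.indicator (↑F) (fun _ => (1:ℝ≥0∞)) k :=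
    ENNReal.tsum_comp_le_tsum_of_injective Subtype.val_injective _
  have step3 : ∑' k : Fin d → ℤ, Set.indicator (↑F) (fun _ => (1:ℝ≥0∞)) k
      = (F.card : ℝ≥0∞) := by
    rw [tsum_eq_sum (s := F) (fun b hb => Set.indicator_of_notMem (by simpa using hb) _)]
    rw [Finset.sum_congr rfl (fun b hb => Set.indicator_of_mem (Finset.mem_coe.mpr hb) _)]
    simp
  have step4 : (F.card : ℝ≥0∞) ≤ 2 ^ ((min ν j - min ν s) * d) := by
    have hcard : F.card ≤ 2 ^ ((min ν j - min ν s) * d) := by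
      rw [hF, Fintype.card_piFinset]
      calc ∏ i : Fin d, (coordSet ν j s (m i)).card
          ≤ ∏ _i : Fin d, 2 ^ (min ν j - min ν s) :=
            Finset.prod_le_prod' (fun i _ => coord_card ν j s hsj (m i))
        _ = 2 ^ ((min ν j - min ν s) * d) := by
            rw [Finset.prod_const, ← pow_mul, Finset.card_univ, Fintype.card_fin]
    calc (F.card : ℝ≥0∞) ≤ ((2 ^ ((min ν j - min ν s) * d) : ℕ) : ℝ≥0∞) := by
          exact_mod_cast hcard
      _ = 2 ^ ((min ν j - min ν s) * d) := by push_cast; ring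
  exact le_trans step1 (le_trans step2 (le_trans (le_of_eq step3) step4))

lemma two_rpow_ne_top (B : ℝ) : (2:ℝ≥0∞) ^ B ≠ ⊤ := by
  simp [ENNReal.rpow_eq_top_iff]

lemma morrey_lamJS_le (d j s : ℕ) (hsj : s ≤ j) (u p : ℝ) (hp : 0 < p) (B : ℝ)
    (hB : ∀ ν : ℕ, (((min ν j - min ν s) * d : ℕ) : ℝ) * (1/p)
        + ((ν * d : ℕ) : ℝ) * (1/u - 1/p) ≤ B) :
    morreyNorm d u p (lamJS d j s) ≤ (2:ℝ≥0∞) ^ B := by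
  rw [morreyNorm]
  apply iSup_le; intro ν; apply iSup_le; intro m
  have hN := N_le d ν j s hsj p hp m
  have h1 : (∑' k : {k : Fin d → ℤ // inDyadic d ν m k},
      (‖lamJS d j s k.1‖₊ : ℝ≥0∞) ^ p) ^ (1/p)
      ≤ ((2:ℝ≥0∞) ^ ((min ν j - min ν s) * d)) ^ (1/p) :=
    ENNReal.rpow_le_rpow hN (by positivity)
  calc ((2 : ℝ≥0∞) ^ (ν * d)) ^ (1 / u - 1 / p) *
        (∑' k : {k : Fin d → ℤ // inDyadic d ν m k},
          (‖lamJS d j s k.1‖₊ : ℝ≥0∞) ^ p) ^ (1 / p)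
      ≤ ((2 : ℝ≥0∞) ^ (ν * d)) ^ (1 / u - 1 / p) *
        ((2:ℝ≥0∞) ^ ((min ν j - min ν s) * d)) ^ (1/p) := mul_le_mul_right h1 _
    _ = (2:ℝ≥0∞) ^ (((ν * d : ℕ) : ℝ) * (1/u - 1/p)) *
        (2:ℝ≥0∞) ^ ((((min ν j - min ν s) * d : ℕ) : ℝ) * (1/p)) := by
        rw [← ENNReal.rpow_natCast 2 (ν * d), ← ENNReal.rpow_natCast 2 ((min ν j - min ν s) * d),
          ← ENNReal.rpow_mul, ← ENNReal.rpow_mul]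
    _ = (2:ℝ≥0∞) ^ ((((min ν j - min ν s) * d : ℕ) : ℝ) * (1/p)
          + ((ν * d : ℕ) : ℝ) * (1/u - 1/p)) := by
        rw [ENNReal.rpow_add _ _ (by norm_num) (by norm_num)]
        ring
    _ ≤ (2:ℝ≥0∞) ^ B := ENNReal.rpow_le_rpow_of_exponent_le one_le_two (hB ν)

lemma lp_lamJS_ge (d j s : ℕ) (hsj : s ≤ j) (r : ℝ) (hr : 0 < r) :
    (2:ℝ≥0∞) ^ ((((j - s) * d : ℕ) : ℝ) * (1 / r)) ≤ lpNorm d r (lamJS d j s) := by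
  classical
  set G : Finset (Fin d → ℤ) :=
    Fintype.piFinset (fun _ => (Finset.range (2^(j-s))).image (fun n : ℕ => (2:ℤ)^s * n))
    with hG
  have hinj : Function.Injective (fun n : ℕ => (2:ℤ)^s * n) := by
    intro x y h
    simp only at h
    have h2s : ((2:ℤ)^s) ≠ 0 := by positivity
    exact_mod_cast mul_left_cancel₀ h2s h
  have hGcard : G.card = 2 ^ ((j - s) * d) := by
    rw [hG, Fintype.card_piFinset]
    simp [Finset.card_image_of_injective _ hinj, Finset.prod_const, ← pow_mul]
  have hmem : ∀ k ∈ G, (‖lamJS d j s k‖₊ : ℝ≥0∞) ^ r = 1 := by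
    intro k hk
    rw [lamJS_nnnorm_rpow d j s r hr]
    rw [if_pos]
    intro i
    have hki : k i ∈ (Finset.range (2^(j-s))).image (fun n : ℕ => (2:ℤ)^s * n) := by
      rw [hG, Fintype.mem_piFinset] at hk
      exact hk i
    obtain ⟨n, hn, hkn⟩ := Finset.mem_image.mp hki
    rw [Finset.mem_range] at hn
    refine ⟨by rw [← hkn]; positivity, ?_, by rw [← hkn]; exact Dvd.intro _ rfl⟩
    rw [← hkn]
    calc (2:ℤ)^s * n < (2:ℤ)^s * 2^(j-s) := by
          have : (n:ℤ) < ((2^(j-s) : ℕ) : ℤ) := by exact_mod_cast hn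
          have h2s : (0:ℤ) < 2^s := by positivity
          push_cast at this ⊢
          nlinarith
      _ = 2^j := by rw [← pow_add]; congr 1; omega
  have hsum : ((2 ^ ((j - s) * d) : ℕ) : ℝ≥0∞)
      ≤ ∑' k : Fin d → ℤ, (‖lamJS d j s k‖₊ : ℝ≥0∞) ^ r := by
    calc ((2 ^ ((j - s) * d) : ℕ) : ℝ≥0∞) = ∑ k ∈ G, (‖lamJS d j s k‖₊ : ℝ≥0∞) ^ r := by
          rw [Finset.sum_congr rfl hmem, Finset.sum_const, hGcard]
          simp
      _ ≤ _ := ENNReal.sum_le_tsum G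
  have := ENNReal.rpow_le_rpow hsum (le_of_lt (by positivity : (0:ℝ) < 1/r))
  rw [lpNorm]
  refine le_trans (le_of_eq ?_) this
  rw [show ((2 ^ ((j - s) * d) : ℕ) : ℝ≥0∞) = (2:ℝ≥0∞) ^ ((j-s)*d) by push_cast; ring,
    ← ENNReal.rpow_natCast 2 ((j - s) * d), ← ENNReal.rpow_mul]

lemma rpow_not_le_C (C : ℝ≥0) : ∃ n : ℕ, ∀ t : ℝ, (n:ℝ) ≤ t → ¬ ((2:ℝ≥0∞)^t ≤ C) := by
  obtain ⟨n, hn⟩ := pow_unbounded_of_one_lt (R := ℝ≥0) C one_lt_two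
  refine ⟨n, fun t ht hle => ?_⟩
  have h1 : ((2:ℝ≥0∞))^(n:ℝ) ≤ (2:ℝ≥0∞)^t := ENNReal.rpow_le_rpow_of_exponent_le one_le_two ht
  have h2 : (2:ℝ≥0∞)^(n:ℝ) = ((2^n : ℝ≥0) : ℝ≥0∞) := by
    rw [ENNReal.rpow_natCast]
    push_cast
    ring
  have h3 : ((2^n : ℝ≥0):ℝ≥0∞) ≤ (C:ℝ≥0∞) := h2 ▸ le_trans h1 hle
  exact absurd (ENNReal.coe_le_coe.mp h3) (not_le.mpr hn)

lemma necessity (d : ℕ) (hd : 0 < d) (u₁ p₁ r : ℝ) (hp₁ : 0 < p₁) (hpu₁ : p₁ ≤ u₁)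
    (hr : 0 < r)
    (h : ∃ C : ℝ≥0, 0 < C ∧ ∀ lam : (Fin d → ℤ) → ℂ, morreyNorm d u₁ p₁ lam ≠ ⊤ →
        lpNorm d r lam ≤ (C : ℝ≥0∞) * morreyNorm d u₁ p₁ lam) :
    u₁ ≤ r ∧ p₁ = u₁ := by
  obtain ⟨C, hC0, hC⟩ := h
  have hu₁ : 0 < u₁ := lt_of_lt_of_le hp₁ hpu₁
  have hd' : (0:ℝ) < d := by exact_mod_cast hd
  have hinv : 1/u₁ ≤ 1/p₁ := one_div_le_one_div_of_le hp₁ hpu₁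
  have hp' : (0:ℝ) < 1/p₁ := by positivity
  have hu' : (0:ℝ) < 1/u₁ := by positivity
  -- key consequence of the embedding
  have key : ∀ (j s : ℕ), s ≤ j → ∀ B : ℝ,
      (∀ ν : ℕ, (((min ν j - min ν s) * d : ℕ) : ℝ) * (1/p₁)
        + ((ν * d : ℕ) : ℝ) * (1/u₁ - 1/p₁) ≤ B) →
      (2:ℝ≥0∞) ^ ((((j - s) * d : ℕ) : ℝ) * (1 / r) - B) ≤ (C : ℝ≥0∞) := by
    intro j s hsj B hB
    have h1 := morrey_lamJS_le d j s hsj u₁ p₁ hp₁ B hB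
    have hfin : morreyNorm d u₁ p₁ (lamJS d j s) ≠ ⊤ :=
      ne_top_of_le_ne_top (two_rpow_ne_top B) h1
    have h3 : (2:ℝ≥0∞) ^ ((((j - s) * d : ℕ) : ℝ) * (1 / r)) ≤ (C:ℝ≥0∞) * (2:ℝ≥0∞)^B :=
      le_trans (lp_lamJS_ge d j s hsj r hr)
        (le_trans (hC (lamJS d j s) hfin) (mul_le_mul_right h1 C))
    have h4 : (2:ℝ≥0∞) ^ ((((j - s) * d : ℕ) : ℝ) * (1 / r) - B)
        = (2:ℝ≥0∞) ^ ((((j - s) * d : ℕ) : ℝ) * (1 / r)) * (2:ℝ≥0∞) ^ (-B) := by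
      rw [← ENNReal.rpow_add _ _ (by norm_num) (by norm_num)]
      ring_nf
    rw [h4]
    calc (2:ℝ≥0∞) ^ ((((j - s) * d : ℕ) : ℝ) * (1 / r)) * (2:ℝ≥0∞) ^ (-B)
        ≤ ((C:ℝ≥0∞) * (2:ℝ≥0∞)^B) * (2:ℝ≥0∞) ^ (-B) := mul_le_mul_left h3 _
      _ = (C:ℝ≥0∞) * ((2:ℝ≥0∞)^B * (2:ℝ≥0∞) ^ (-B)) := by ring
      _ = (C:ℝ≥0∞) := by
          rw [← ENNReal.rpow_add _ _ (by norm_num) (by norm_num)]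
          simp
  obtain ⟨n, hn⟩ := rpow_not_le_C C
  -- first claim : u₁ ≤ r
  have claim1 : u₁ ≤ r := by
    by_contra hru
    push_neg at hru
    have hδ : 0 < 1/r - 1/u₁ := by
      have := one_div_lt_one_div_of_lt hr hru
      linarith
    obtain ⟨j, hj⟩ := exists_nat_ge ((n:ℝ) / (d * (1/r - 1/u₁)))
    have hB0 : ∀ ν : ℕ, (((min ν j - min ν 0) * d : ℕ) : ℝ) * (1/p₁)
        + ((ν * d : ℕ) : ℝ) * (1/u₁ - 1/p₁) ≤ ((j * d : ℕ) : ℝ) * (1/u₁) := by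
      intro ν
      rcases le_total ν j with hν | hν
      · rw [min_eq_left hν, Nat.min_zero, Nat.sub_zero]
        have hν' : (ν:ℝ) ≤ (j:ℝ) := by exact_mod_cast hν
        push_cast
        nlinarith [mul_le_mul_of_nonneg_right hν' (by positivity : (0:ℝ) ≤ (d:ℝ) * (1/u₁))]
      · rw [min_eq_right hν, Nat.min_zero, Nat.sub_zero]
        have hν' : (j:ℝ) ≤ (ν:ℝ) := by exact_mod_cast hν
        push_cast
        nlinarith [mul_nonneg (mul_nonneg (sub_nonneg.mpr hν') (le_of_lt hd'))
          (sub_nonneg.mpr hinv)]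
    have hkey := key j 0 (Nat.zero_le j) _ hB0
    apply hn _ _ hkey
    rw [Nat.sub_zero]
    push_cast
    have : (n:ℝ) ≤ (j:ℝ) * (d * (1/r - 1/u₁)) := by
      rw [div_le_iff₀ (by positivity)] at hj
      linarith
    nlinarith
  -- second claim : p₁ = u₁
  have claim2 : p₁ = u₁ := by
    refine le_antisymm hpu₁ ?_
    by_contra hlt
    push_neg at hlt
    have hε : 0 < 1 - p₁/u₁ := by
      have : p₁/u₁ < 1 := (div_lt_one hu₁).mpr hlt
      linarith
    obtain ⟨j, hj⟩ := exists_nat_ge (((n:ℝ) * r / d + 1) / (1 - p₁/u₁))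
    set s : ℕ := ⌈(j:ℝ) * (p₁/u₁)⌉₊ with hs
    have hsle : (j:ℝ) * (p₁/u₁) ≤ s := Nat.le_ceil _
    have hsj : s ≤ j := by
      rw [hs, Nat.ceil_le]
      calc (j:ℝ) * (p₁/u₁) ≤ (j:ℝ) * 1 := by
            apply mul_le_mul_of_nonneg_left _ (Nat.cast_nonneg j)
            linarith
        _ = (j:ℝ) := mul_one _
    have hslt : (s:ℝ) ≤ (j:ℝ) * (p₁/u₁) + 1 := by
      rw [hs]
      have := Nat.ceil_lt_add_one (by positivity : (0:ℝ) ≤ (j:ℝ) * (p₁/u₁))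
      linarith
    -- the crucial inequality s*d/p₁ ≥ j*d/u₁
    have hcru : (j:ℝ) * d * (1/u₁) ≤ (s:ℝ) * d * (1/p₁) := by
      have h5 : (j:ℝ) * (p₁/u₁) * (d * (1/p₁)) ≤ (s:ℝ) * (d * (1/p₁)) :=
        mul_le_mul_of_nonneg_right hsle (by positivity)
      have h6 : (j:ℝ) * (p₁/u₁) * (d * (1/p₁)) = (j:ℝ) * d * (1/u₁) := by
        field_simp
      linarith
    have hB0 : ∀ ν : ℕ, (((min ν j - min ν s) * d : ℕ) : ℝ) * (1/p₁)
        + ((ν * d : ℕ) : ℝ) * (1/u₁ - 1/p₁) ≤ (0:ℝ) := by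
      intro ν
      rcases le_total ν s with hνs | hsν
      · rw [min_eq_left (le_trans hνs hsj), min_eq_left hνs, Nat.sub_self]
        push_cast
        have hν0 : (0:ℝ) ≤ (ν:ℝ) := Nat.cast_nonneg ν
        nlinarith [mul_nonneg (mul_nonneg hν0 (le_of_lt hd')) (sub_nonneg.mpr hinv)]
      · rw [min_eq_right hsν]
        rcases le_total ν j with hνj | hjν
        · rw [min_eq_left hνj]
          have hν' : (ν:ℝ) ≤ (j:ℝ) := by exact_mod_cast hνj
          have hsν' : (s:ℝ) ≤ (ν:ℝ) := by exact_mod_cast hsν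
          rw [Nat.cast_mul, Nat.cast_sub hsν]
          push_cast
          nlinarith [mul_le_mul_of_nonneg_right hν' (by positivity : (0:ℝ) ≤ (d:ℝ) * (1/u₁)), hcru]
        · rw [min_eq_right hjν]
          have hν' : (j:ℝ) ≤ (ν:ℝ) := by exact_mod_cast hjν
          have hsj' : (s:ℝ) ≤ (j:ℝ) := by exact_mod_cast hsj
          rw [Nat.cast_mul, Nat.cast_sub hsj]
          push_cast
          nlinarith [mul_nonneg (mul_nonneg (sub_nonneg.mpr hν') (le_of_lt hd'))
            (sub_nonneg.mpr hinv)]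
    have hkey := key j s hsj 0 hB0
    apply hn _ _ hkey
    rw [Nat.cast_mul, Nat.cast_sub hsj]
    have hjs : ((n:ℝ) * r / d + 1) ≤ (j:ℝ) * (1 - p₁/u₁) := by
      rw [div_le_iff₀ hε] at hj
      linarith
    have hd2 : (j:ℝ) - s ≥ (n:ℝ) * r / d := by nlinarith
    have : (n:ℝ) * r ≤ ((j:ℝ) - s) * d := by
      rw [ge_iff_le, div_le_iff₀ hd'] at hd2
      linarith
    rw [sub_zero]
    have h9 : (n:ℝ) * r * (1/r) ≤ ((j:ℝ) - (s:ℝ)) * (d:ℝ) * (1/r) :=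
      mul_le_mul_of_nonneg_right this (by positivity)
    have h10 : (n:ℝ) * r * (1/r) = (n:ℝ) := by field_simp
    push_cast
    linarith
  exact ⟨claim1, claim2⟩

lemma lpNorm_mono (d : ℕ) (a b : ℝ) (ha : 0 < a) (hab : a ≤ b) (lam : (Fin d → ℤ) → ℂ) :
    lpNorm d b lam ≤ lpNorm d a lam := by
  have hb : 0 < b := lt_of_lt_of_le ha hab
  set f : (Fin d → ℤ) → ℝ≥0∞ := fun k => (‖lam k‖₊ : ℝ≥0∞) with hf
  set S : ℝ≥0∞ := ∑' k, f k ^ a with hS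
  have hlpa : lpNorm d a lam = S ^ (1/a) := rfl
  rw [hlpa]
  by_cases hST : S = ⊤
  · rw [hST]
    rw [ENNReal.top_rpow_of_pos (by positivity)]
    exact le_top
  by_cases hS0 : S = 0
  · have hfk : ∀ k, f k = 0 := by
      intro k
      have h1 : f k ^ a = 0 := by
        have := ENNReal.le_tsum (f := fun k => f k ^ a) k
        rw [← hS, hS0] at this
        exact le_antisymm this zero_le
      rcases (ENNReal.rpow_eq_zero_iff).mp h1 with ⟨h, _⟩ | ⟨_, h⟩
      · exact h
      · linarith
    have hz : lpNorm d b lam = 0 := by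
      have hzz : ∀ k : Fin d → ℤ, (‖lam k‖₊ : ℝ≥0∞) ^ b = 0 := fun k => by
        rw [show ((‖lam k‖₊ : ℝ≥0∞)) = f k from rfl, hfk k]
        exact ENNReal.zero_rpow_of_pos hb
      rw [lpNorm, tsum_congr hzz, tsum_zero]
      exact ENNReal.zero_rpow_of_pos (by positivity)
    rw [hz]
    exact zero_le
  set T : ℝ≥0∞ := S ^ (1/a) with hT
  have hTtop : T ≠ ⊤ := by
    rw [hT]
    intro h
    rcases ENNReal.rpow_eq_top_iff.mp h with ⟨h1, _⟩ | ⟨h1, _⟩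
    · exact hS0 h1
    · exact hST h1
  have hT0 : T ≠ 0 := by
    rw [hT]
    intro h
    rcases ENNReal.rpow_eq_zero_iff.mp h with ⟨h1, _⟩ | ⟨h1, h2⟩
    · exact hS0 h1
    · have : (0:ℝ) < 1/a := by positivity
      linarith
  have hSTa : T ^ a = S := by
    rw [hT, ← ENNReal.rpow_mul]
    rw [show (1/a) * a = 1 by field_simp, ENNReal.rpow_one]
  have hfk : ∀ k, f k ≤ T := by
    intro k
    have h1 : f k ^ a ≤ S := ENNReal.le_tsum k
    have h2 : (f k ^ a) ^ (1/a) ≤ T := ENNReal.rpow_le_rpow h1 (by positivity)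
    rwa [← ENNReal.rpow_mul, show a * (1/a) = 1 by field_simp, ENNReal.rpow_one] at h2
  have hfb : ∀ k, f k ^ b ≤ f k ^ a * T ^ (b - a) := by
    intro k
    by_cases hf0 : f k = 0
    · rw [hf0, ENNReal.zero_rpow_of_pos hb]
      exact zero_le
    · have hftop : f k ≠ ⊤ := ENNReal.coe_ne_top
      calc f k ^ b = f k ^ (a + (b - a)) := by ring_nf
        _ = f k ^ a * f k ^ (b - a) := ENNReal.rpow_add _ _ hf0 hftop
        _ ≤ f k ^ a * T ^ (b - a) :=
            mul_le_mul_right (ENNReal.rpow_le_rpow (hfk k) (by linarith)) _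
  have hsum : ∑' k, f k ^ b ≤ T ^ b := by
    calc ∑' k, f k ^ b ≤ ∑' k, f k ^ a * T ^ (b - a) := ENNReal.tsum_le_tsum hfb
      _ = S * T ^ (b - a) := by rw [ENNReal.tsum_mul_right]
      _ = T ^ a * T ^ (b - a) := by rw [hSTa]
      _ = T ^ b := by
          rw [← ENNReal.rpow_add _ _ hT0 hTtop]
          ring_nf
  calc lpNorm d b lam = (∑' k, f k ^ b) ^ (1/b) := rfl
    _ ≤ (T ^ b) ^ (1/b) := ENNReal.rpow_le_rpow hsum (by positivity)
    _ = T := by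
        rw [← ENNReal.rpow_mul, show b * (1/b) = 1 by field_simp, ENNReal.rpow_one]

lemma lp_le_morrey (d : ℕ) (u : ℝ) (hu : 0 < u) (lam : (Fin d → ℤ) → ℂ) :
    lpNorm d u lam ≤ (2:ℝ≥0∞) ^ ((d:ℝ) * (1/u)) * morreyNorm d u u lam := by
  classical
  set M : ℝ≥0∞ := morreyNorm d u u lam with hM
  set g : (Fin d → ℤ) → ℝ≥0∞ := fun k => (‖lam k‖₊ : ℝ≥0∞) ^ u with hg
  have hcube : ∀ (j : ℕ) (m : Fin d → ℤ),
      ∑' k : {k : Fin d → ℤ // inDyadic d j m k}, g k.1 ≤ M ^ u := by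
    intro j m
    have h1 : (∑' k : {k : Fin d → ℤ // inDyadic d j m k}, g k.1) ^ (1/u) ≤ M := by
      have h2 : ((2 : ℝ≥0∞) ^ (j * d)) ^ (1 / u - 1 / u) *
          (∑' k : {k : Fin d → ℤ // inDyadic d j m k}, (‖lam k.1‖₊ : ℝ≥0∞) ^ u) ^ (1 / u)
          ≤ M := by
        rw [hM, morreyNorm]
        exact le_iSup₂ (f := fun (j : ℕ) (m : Fin d → ℤ) =>
          ((2 : ℝ≥0∞) ^ (j * d)) ^ (1 / u - 1 / u) *
            (∑' k : {k : Fin d → ℤ // inDyadic d j m k}, (‖lam k.1‖₊ : ℝ≥0∞) ^ u) ^ (1 / u))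
          j m
      rwa [sub_self, ENNReal.rpow_zero, one_mul] at h2
    have h3 := ENNReal.rpow_le_rpow h1 hu.le
    rwa [← ENNReal.rpow_mul, show (1/u) * u = 1 by field_simp, ENNReal.rpow_one] at h3
  -- bound for any finite sum
  have hfin : ∀ F : Finset (Fin d → ℤ), ∑ k ∈ F, g k ≤ 2^d * M^u := by
    intro F
    rw [← Finset.sum_fiberwise F (fun k => fun i => decide (0 ≤ k i)) g]
    have hσ : ∀ σ : Fin d → Bool,
        ∑ k ∈ F.filter (fun k => (fun i => decide (0 ≤ k i)) = σ), g k ≤ M ^ u := by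
      intro σ
      set Fσ := F.filter (fun k => (fun i => decide (0 ≤ k i)) = σ) with hFσ
      set R : ℕ := Fσ.sup (fun k => Finset.univ.sup fun i => (k i).natAbs) with hR
      set j : ℕ := R + 1 with hj
      set m : Fin d → ℤ := fun i => if σ i then 0 else -1 with hm
      have hcube_mem : ∀ k ∈ Fσ, inDyadic d j m k := by
        intro k hk i
        have hsig : decide (0 ≤ k i) = σ i := by
          have := (Finset.mem_filter.mp hk).2
          exact congrFun this i
        have habs : (k i).natAbs ≤ R := by
          calc (k i).natAbs ≤ Finset.univ.sup (fun i => (k i).natAbs) :=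
                Finset.le_sup (f := fun i => (k i).natAbs) (Finset.mem_univ i)
            _ ≤ R := Finset.le_sup (f := fun k : Fin d → ℤ =>
                Finset.univ.sup fun i => (k i).natAbs) hk
        have habs2 : |k i| < 2 ^ j := by
          have h1 : ((k i).natAbs : ℤ) ≤ R := by exact_mod_cast habs
          have h2 : (R:ℤ) < 2 ^ j := by
            have : R < 2 ^ j := by
              calc R < 2 ^ R := Nat.lt_two_pow_self
                _ ≤ 2 ^ j := Nat.pow_le_pow_right (by norm_num) (by rw [hj]; exact Nat.le_succ R)
            exact_mod_cast this
          rw [Int.abs_eq_natAbs]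
          exact lt_of_le_of_lt h1 h2
        rw [hm]
        cases hσb : σ i
        case false =>
          have hneg : ¬ (0 ≤ k i) := by
            rw [hσb] at hsig
            exact of_decide_eq_false hsig
          push_neg at hneg
          simp only [hσb, if_neg Bool.false_ne_true]
          constructor
          · have := abs_lt.mp habs2
            linarith [this.1]
          · simpa using hneg
        case true =>
          have hpos : 0 ≤ k i := by
            rw [hσb] at hsig
            exact of_decide_eq_true hsig
          simp only [hσb, if_pos rfl]
          constructor
          · simpa using hpos
          · have := abs_lt.mp habs2
            simpa using this.2
      calc ∑ k ∈ Fσ, g k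
          = ∑ k ∈ Fσ, Set.indicator {k | inDyadic d j m k} g k := by
            refine Finset.sum_congr rfl (fun k hk => ?_)
            exact (Set.indicator_of_mem (hcube_mem k hk) g).symm
        _ ≤ ∑' k : Fin d → ℤ, Set.indicator {k | inDyadic d j m k} g k :=
            ENNReal.sum_le_tsum _
        _ = ∑' k : {k : Fin d → ℤ // inDyadic d j m k}, g k.1 :=
            (tsum_subtype {k | inDyadic d j m k} g).symm
        _ ≤ M ^ u := hcube j m
    calc ∑ σ : Fin d → Bool, ∑ k ∈ F.filter (fun k => (fun i => decide (0 ≤ k i)) = σ), g k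
        ≤ ∑ _σ : Fin d → Bool, M ^ u := Finset.sum_le_sum (fun σ _ => hσ σ)
      _ = 2^d * M^u := by
          rw [Finset.sum_const, Finset.card_univ]
          simp [nsmul_eq_mul]
  have hS : ∑' k, g k ≤ 2^d * M^u := by
    rw [ENNReal.tsum_eq_iSup_sum]
    exact iSup_le hfin
  have h4 := ENNReal.rpow_le_rpow hS (by positivity : (0:ℝ) ≤ 1/u)
  calc lpNorm d u lam = (∑' k, g k) ^ (1/u) := rfl
    _ ≤ ((2:ℝ≥0∞)^d * M^u) ^ (1/u) := h4
    _ = (2:ℝ≥0∞) ^ ((d:ℝ) * (1/u)) * M := by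
        rw [ENNReal.mul_rpow_of_nonneg _ _ (by positivity : (0:ℝ) ≤ 1/u),
          ← ENNReal.rpow_natCast 2 d, ← ENNReal.rpow_mul,
          ← ENNReal.rpow_mul, show u * (1/u) = 1 by field_simp, ENNReal.rpow_one]

theorem morrey_embeds_lp_iff (d : ℕ) (hd : 0 < d) (u₁ p₁ u₂ : ℝ)
    (hp₁ : 0 < p₁) (hpu₁ : p₁ ≤ u₁) (hu₂ : 0 < u₂) :
    ((∃ C : ℝ≥0, 0 < C ∧ ∀ lam : (Fin d → ℤ) → ℂ, morreyNorm d u₁ p₁ lam ≠ ⊤ →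
        lpNorm d u₂ lam ≤ (C : ℝ≥0∞) * morreyNorm d u₁ p₁ lam) ↔
      (u₁ ≤ u₂ ∧ p₁ = u₁)) ∧
    (p₁ < u₁ → ∀ r : ℝ, 0 < r →
      ¬ ∃ C : ℝ≥0, 0 < C ∧ ∀ lam : (Fin d → ℤ) → ℂ, morreyNorm d u₁ p₁ lam ≠ ⊤ →
          lpNorm d r lam ≤ (C : ℝ≥0∞) * morreyNorm d u₁ p₁ lam) := by
  constructor
  · constructor
    · intro h
      exact ⟨(necessity d hd u₁ p₁ u₂ hp₁ hpu₁ hu₂ h).1, (necessity d hd u₁ p₁ u₂ hp₁ hpu₁ hu₂ h).2⟩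
    · rintro ⟨h1, h2⟩
      subst h2
      refine ⟨(2:ℝ≥0) ^ ((d:ℝ) * (1/p₁)), ?_, ?_⟩
      · exact NNReal.rpow_pos (by norm_num)
      · intro lam _
        have hcast : (((2:ℝ≥0) ^ ((d:ℝ) * (1/p₁)) : ℝ≥0) : ℝ≥0∞)
            = (2:ℝ≥0∞) ^ ((d:ℝ) * (1/p₁)) := by
          rw [ENNReal.coe_rpow_of_ne_zero (by norm_num : (2:ℝ≥0) ≠ 0)]
          norm_num
        calc lpNorm d u₂ lam ≤ lpNorm d p₁ lam := lpNorm_mono d p₁ u₂ hp₁ h1 lam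
          _ ≤ (2:ℝ≥0∞) ^ ((d:ℝ) * (1/p₁)) * morreyNorm d p₁ p₁ lam :=
              lp_le_morrey d p₁ hp₁ lam
          _ = (((2:ℝ≥0) ^ ((d:ℝ) * (1/p₁)) : ℝ≥0) : ℝ≥0∞) * morreyNorm d p₁ p₁ lam := by
              rw [hcast]
  · intro hlt r hr hembed
    exact absurd (necessity d hd u₁ p₁ r hp₁ hpu₁ hr hembed).2 (ne_of_lt hlt)
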